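/- Cross-term Green's function bound: for a ∈ A, b ∈ B in a partition A ⊔ B ⊔ C of the state space, 0 ≤ G_{A∪B}(a,b) ≤ min{ (σ_b/(1−ρ_a))·G_A(a,a), (ψ_a/(1−φ_b))·G_B(b,b) }. -/

import Mathlib

open MeasureTheory ProbabilityTheory
open scoped ENNReal

noncomputable section

/-- First hitting time of a set `A` by a path `p`, valued in `ℝ≥0∞` (`⊤` if never hit). -/
def hitTime {V : Type*} (p : ℕ → V) (A : Set V) : ℝ≥0∞ :=
  ⨅ t ∈ {t : ℕ | p t ∈ A}, (t : ℝ≥0∞)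

/-- First hitting time of `A` strictly after time `T`. -/
def hitAfter {V : Type*} (p : ℕ → V) (A : Set V) (T : ℝ≥0∞) : ℝ≥0∞ :=
  ⨅ t ∈ {t : ℕ | T < (t : ℝ≥0∞) ∧ p t ∈ A}, (t : ℝ≥0∞)

/-- Position at time `t` of the random walk started at `x` with steps `X j`. -/
def walk {Ω : Type*} (X : ℕ → Ω → ℤ × ℤ) (x : ℤ × ℤ) (t : ℕ) (ω : Ω) : ℤ × ℤ :=
  x + ∑ j ∈ Finset.range t, X j ω

/-- Green's function of visits to `y` from `x` before hitting `Eᶜ`. -/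
def green {Ω : Type*} [MeasurableSpace Ω] (P : Measure Ω) (X : ℕ → Ω → ℤ × ℤ)
    (E : Set (ℤ × ℤ)) (x y : ℤ × ℤ) : ℝ≥0∞ :=
  ∑' j : ℕ, P {ω | walk X x j ω = y ∧ (j : ℝ≥0∞) < hitTime (fun t => walk X x t ω) Eᶜ}

/-- `ψ_x(D,C) = P^x(T_D < T_C)`. -/
def excPsi {Ω : Type*} [MeasurableSpace Ω] (P : Measure Ω) (X : ℕ → Ω → ℤ × ℤ)
    (D C : Set (ℤ × ℤ)) (x : ℤ × ℤ) : ℝ≥0∞ :=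
  P {ω | hitTime (fun t => walk X x t ω) D < hitTime (fun t => walk X x t ω) C}

/-- `ρ_x(D,E,C) = P^x(T_D < T_C` and then `T_E < T_C)`: the walk reaches `D` before `C` and
afterwards reaches `E` before `C`. -/
def excRho {Ω : Type*} [MeasurableSpace Ω] (P : Measure Ω) (X : ℕ → Ω → ℤ × ℤ)
    (D E C : Set (ℤ × ℤ)) (x : ℤ × ℤ) : ℝ≥0∞ :=
  P {ω | hitTime (fun t => walk X x t ω) D < hitTime (fun t => walk X x t ω) C ∧
      hitAfter (fun t => walk X x t ω) E (hitTime (fun t => walk X x t ω) D) <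
        hitTime (fun t => walk X x t ω) C}


namespace CrossTermAux

open MeasureTheory ProbabilityTheory
open scoped ENNReal

theorem hitTime_le {V : Type*} (p : ℕ → V) (S : Set V) {t : ℕ} (h : p t ∈ S) :
    hitTime p S ≤ t := by
  exact iInf₂_le t h

theorem lt_hitTime_iff {V : Type*} {p : ℕ → V} {S : Set V} {j : ℕ} :
    (j : ℝ≥0∞) < hitTime p S ↔ ∀ t ≤ j, p t ∉ S := by
  constructor
  · intro h t ht hmem
    exact absurd (lt_of_lt_of_le h ((hitTime_le p S hmem).trans (by exact_mod_cast ht)))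
      (lt_irrefl _)
  · intro h
    have : (j : ℝ≥0∞) + 1 ≤ hitTime p S := by
      refine le_iInf₂ fun t ht => ?_
      have : j < t := by
        by_contra hc
        exact h t (Nat.le_of_not_lt hc) ht
      exact_mod_cast Nat.succ_le_of_lt this
    exact lt_of_lt_of_le (ENNReal.lt_add_right (by simp) one_ne_zero) this

theorem hitTime_eq {V : Type*} {p : ℕ → V} {S : Set V} {r : ℕ}
    (h : p r ∈ S) (hmin : ∀ s < r, p s ∉ S) : hitTime p S = r := by
  refine le_antisymm (hitTime_le p S h) (le_iInf₂ fun t ht => ?_)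
  have : r ≤ t := by
    by_contra hc
    exact hmin t (Nat.lt_of_not_le hc) ht
  exact_mod_cast this

theorem hitAfter_le {V : Type*} (p : ℕ → V) (S : Set V) {T : ℝ≥0∞} {t : ℕ}
    (h1 : T < t) (h2 : p t ∈ S) : hitAfter p S T ≤ t :=
  iInf₂_le t ⟨h1, h2⟩

/-- deterministic walk from `x` with steps `c`. -/
def W (x : ℤ × ℤ) (c : ℕ → ℤ × ℤ) (t : ℕ) : ℤ × ℤ := x + ∑ i ∈ Finset.range t, c i

theorem walk_eq_W {Ω : Type*} (X : ℕ → Ω → ℤ × ℤ) (x : ℤ × ℤ) (t : ℕ) (ω : Ω) :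
    walk X x t ω = W x (fun i => X i ω) t := rfl

theorem W_congr {x : ℤ × ℤ} {c c' : ℕ → ℤ × ℤ} {t : ℕ} (h : ∀ i < t, c i = c' i) :
    W x c t = W x c' t := by
  unfold W
  congr 1
  exact Finset.sum_congr rfl fun i hi => h i (Finset.mem_range.mp hi)

theorem W_shift (x : ℤ × ℤ) (c : ℕ → ℤ × ℤ) (t s : ℕ) :
    W x c (t + s) = W (W x c t) (fun i => c (t + i)) s := by
  unfold W
  rw [Finset.sum_range_add, add_assoc]

end CrossTermAux
namespace CrossTermAux
set_option linter.unusedSectionVars false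

open MeasureTheory ProbabilityTheory
open scoped ENNReal

theorem measurableSet_ZZ (s : Set (ℤ × ℤ)) : MeasurableSet s :=
  (Set.to_countable s).measurableSet

section Prob

variable {Ω : Type*} [MeasurableSpace Ω] {P : Measure Ω}
  {X : ℕ → Ω → ℤ × ℤ} {μ : Measure (ℤ × ℤ)}

theorem prob_preimage (hX : ∀ j, Measurable (X j)) (hlaw : ∀ j, Measure.map (X j) P = μ)
    (j : ℕ) (s : Set (ℤ × ℤ)) : P (X j ⁻¹' s) = μ s := by
  rw [← hlaw j, Measure.map_apply (hX j) (measurableSet_ZZ s)]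

/-- extension of a finite tuple to an infinite one -/
def ext (n : ℕ) (d : Fin n → ℤ × ℤ) : ℕ → ℤ × ℤ := fun i => if h : i < n then d ⟨i, h⟩ else 0

theorem prob_atom (hX : ∀ j, Measurable (X j))
    (hind : iIndepFun X P) (hlaw : ∀ j, Measure.map (X j) P = μ)
    (n : ℕ) (c : Fin n → ℤ × ℤ) :
    P {ω | ∀ i : Fin n, X i ω = c i} = ∏ i : Fin n, μ {c i} := by
  classical
  set sets : ℕ → Set (ℤ × ℤ) := fun i => if h : i < n then {c ⟨i, h⟩} else Set.univ with hsets
  have hev : {ω | ∀ i : Fin n, X i ω = c i} = ⋂ i ∈ Finset.range n, X i ⁻¹' sets i := by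
    ext ω
    simp only [Set.mem_setOf_eq, Set.mem_iInter, Finset.mem_range, Set.mem_preimage, hsets]
    constructor
    · intro h i hi
      rw [dif_pos hi]
      exact h ⟨i, hi⟩
    · intro h i
      have := h i.1 i.2
      rwa [dif_pos i.2] at this
  rw [hev, hind.measure_inter_preimage_eq_mul (Finset.range n)
    (fun i _ => measurableSet_ZZ _)]
  rw [Finset.prod_range fun i => P (X i ⁻¹' sets i)]
  refine Finset.prod_congr rfl fun i _ => ?_
  rw [prob_preimage hX hlaw, hsets]
  simp [i.2]

/-- atom events indexed by tuples -/
theorem measurable_atom (hX : ∀ j, Measurable (X j)) (n : ℕ) (c : Fin n → ℤ × ℤ) :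
    MeasurableSet {ω | ∀ i : Fin n, X i ω = c i} := by
  have : {ω | ∀ i : Fin n, X i ω = c i} = ⋂ i : Fin n, X i ⁻¹' {c i} := by
    ext ω; simp [Set.mem_iInter]
  rw [this]
  exact MeasurableSet.iInter fun i => (hX i) (measurableSet_ZZ _)

theorem event_eq_iUnion (n : ℕ) (Q : (ℕ → ℤ × ℤ) → Prop)
    (hQ : ∀ c c', (∀ i < n, c i = c' i) → Q c → Q c') :
    {ω | Q fun i => X i ω} =
      ⋃ d : {d : Fin n → ℤ × ℤ // Q (ext n d)}, {ω | ∀ i : Fin n, X i ω = d.1 i} := by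
  ext ω
  simp only [Set.mem_setOf_eq, Set.mem_iUnion]
  constructor
  · intro h
    refine ⟨⟨fun i => X i ω, hQ _ _ (fun i hi => by simp [ext, hi]) h⟩, fun i => rfl⟩
  · rintro ⟨d, hd⟩
    refine hQ _ _ (fun i hi => ?_) d.2
    simp [ext, hi, hd ⟨i, hi⟩]

theorem prob_cyl (hX : ∀ j, Measurable (X j))
    (hind : iIndepFun X P) (hlaw : ∀ j, Measure.map (X j) P = μ)
    (n : ℕ) (Q : (ℕ → ℤ × ℤ) → Prop)
    (hQ : ∀ c c', (∀ i < n, c i = c' i) → Q c → Q c') :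
    P {ω | Q fun i => X i ω} =
      ∑' d : {d : Fin n → ℤ × ℤ // Q (ext n d)}, ∏ i : Fin n, μ {d.1 i} := by
  have hdisj : Pairwise (Function.onFun Disjoint
      fun d : {d : Fin n → ℤ × ℤ // Q (ext n d)} => {ω | ∀ i : Fin n, X i ω = d.1 i}) := by
    intro d e hde
    refine Set.disjoint_left.mpr fun ω hd he => hde ?_
    exact Subtype.ext (funext fun i => by rw [← hd i, ← he i])
  rw [event_eq_iUnion n Q hQ,
    measure_iUnion hdisj (fun d => measurable_atom hX n d.1)]
  exact tsum_congr fun d => prob_atom hX hind hlaw n d.1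

theorem measurable_cyl (hX : ∀ j, Measurable (X j)) (n : ℕ) (Q : (ℕ → ℤ × ℤ) → Prop)
    (hQ : ∀ c c', (∀ i < n, c i = c' i) → Q c → Q c') :
    MeasurableSet {ω | Q fun i => X i ω} := by
  rw [event_eq_iUnion n Q hQ]
  exact MeasurableSet.iUnion fun d => measurable_atom hX n d.1

end Prob

end CrossTermAux
namespace CrossTermAux
set_option linter.unusedSectionVars false

open MeasureTheory ProbabilityTheory
open scoped ENNReal

section Prob

variable {Ω : Type*} [MeasurableSpace Ω] {P : Measure Ω}
  {X : ℕ → Ω → ℤ × ℤ} {μ : Measure (ℤ × ℤ)}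

theorem prob_pair_atom (hX : ∀ j, Measurable (X j))
    (hind : iIndepFun X P) (hlaw : ∀ j, Measure.map (X j) P = μ)
    (t m : ℕ) (d : Fin t → ℤ × ℤ) (e : Fin m → ℤ × ℤ) :
    P {ω | (∀ i : Fin t, X i ω = d i) ∧ (∀ i : Fin m, X (t + i) ω = e i)} =
      (∏ i : Fin t, μ {d i}) * ∏ i : Fin m, μ {e i} := by
  classical
  set sets : ℕ → Set (ℤ × ℤ) := fun i =>
    if h : i < t then {d ⟨i, h⟩} else if h2 : i - t < m then {e ⟨i - t, h2⟩} else Set.univ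
    with hsets
  have hev : {ω | (∀ i : Fin t, X i ω = d i) ∧ (∀ i : Fin m, X (t + i) ω = e i)} =
      ⋂ i ∈ Finset.range (t + m), X i ⁻¹' sets i := by
    ext ω
    simp only [Set.mem_setOf_eq, Set.mem_iInter, Finset.mem_range, Set.mem_preimage, hsets]
    constructor
    · rintro ⟨h1, h2⟩ i hi
      by_cases hit : i < t
      · rw [dif_pos hit]; exact h1 ⟨i, hit⟩
      · have him : i - t < m := by omega
        rw [dif_neg hit, dif_pos him, Set.mem_singleton_iff]
        have h2' := h2 ⟨i - t, him⟩
        rwa [show t + (i - t) = i from by omega] at h2'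
    · intro h
      constructor
      · intro i
        have := h i.1 (by omega)
        rwa [dif_pos i.2] at this
      · intro i
        have h' := h (t + i.1) (by omega)
        rw [dif_neg (show ¬ t + i.1 < t by omega)] at h'
        simp only [show t + i.1 - t = i.1 from by omega] at h'
        rw [dif_pos i.2, Set.mem_singleton_iff] at h'
        simpa using h'
  rw [hev, hind.measure_inter_preimage_eq_mul (Finset.range (t + m))
    (fun i _ => measurableSet_ZZ _), Finset.prod_range_add]
  congr 1
  · rw [Finset.prod_range fun i => P (X i ⁻¹' sets i)]
    refine Finset.prod_congr rfl fun i _ => ?_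
    rw [prob_preimage hX hlaw, hsets]
    simp [i.2]
  · rw [Finset.prod_range fun i => P (X (t + i) ⁻¹' sets (t + i))]
    refine Finset.prod_congr rfl fun i _ => ?_
    rw [prob_preimage hX hlaw, hsets]
    have h1 : ¬ t + i.1 < t := by omega
    have h2 : t + i.1 - t = i.1 := by omega
    simp only [dif_neg h1, h2, dif_pos i.2]

theorem prob_split (hX : ∀ j, Measurable (X j))
    (hind : iIndepFun X P) (hlaw : ∀ j, Measure.map (X j) P = μ)
    (t m : ℕ) (Q1 Q2 : (ℕ → ℤ × ℤ) → Prop)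
    (hQ1 : ∀ c c', (∀ i < t, c i = c' i) → Q1 c → Q1 c')
    (hQ2 : ∀ c c', (∀ i < m, c i = c' i) → Q2 c → Q2 c') :
    P {ω | Q1 (fun i => X i ω) ∧ Q2 (fun i => X (t + i) ω)} =
      P {ω | Q1 fun i => X i ω} * P {ω | Q2 fun i => X i ω} := by
  classical
  let ι := {d : Fin t → ℤ × ℤ // Q1 (ext t d)} × {e : Fin m → ℤ × ℤ // Q2 (ext m e)}
  have hev : {ω | Q1 (fun i => X i ω) ∧ Q2 (fun i => X (t + i) ω)} =
      ⋃ p : ι, {ω | (∀ i : Fin t, X i ω = p.1.1 i) ∧ (∀ i : Fin m, X (t + i) ω = p.2.1 i)} := by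
    ext ω
    simp only [Set.mem_setOf_eq, Set.mem_iUnion]
    constructor
    · rintro ⟨h1, h2⟩
      refine ⟨⟨⟨fun i => X i ω, hQ1 _ _ (fun i hi => by simp [ext, hi]) h1⟩,
        ⟨fun i => X (t + i) ω, hQ2 _ _ (fun i hi => by simp [ext, hi]) h2⟩⟩,
        fun i => rfl, fun i => rfl⟩
    · rintro ⟨p, hp1, hp2⟩
      constructor
      · refine hQ1 _ _ (fun i hi => ?_) p.1.2
        simp [ext, hi, hp1 ⟨i, hi⟩]
      · refine hQ2 _ _ (fun i hi => ?_) p.2.2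
        simp [ext, hi, hp2 ⟨i, hi⟩]
  have hdisj : Pairwise (Function.onFun Disjoint fun p : ι =>
      {ω | (∀ i : Fin t, X i ω = p.1.1 i) ∧ (∀ i : Fin m, X (t + i) ω = p.2.1 i)}) := by
    rintro p q hpq
    refine Set.disjoint_left.mpr fun ω hp hq => hpq ?_
    refine Prod.ext (Subtype.ext (funext fun i => ?_)) (Subtype.ext (funext fun i => ?_))
    · rw [← hp.1 i, ← hq.1 i]
    · rw [← hp.2 i, ← hq.2 i]
  have hmeas : ∀ p : ι, MeasurableSet
      {ω | (∀ i : Fin t, X i ω = p.1.1 i) ∧ (∀ i : Fin m, X (t + i) ω = p.2.1 i)} := by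
    intro p
    have : {ω | (∀ i : Fin t, X i ω = p.1.1 i) ∧ (∀ i : Fin m, X (t + i) ω = p.2.1 i)} =
        (⋂ i : Fin t, X i ⁻¹' {p.1.1 i}) ∩ ⋂ i : Fin m, X (t + i) ⁻¹' {p.2.1 i} := by
      ext ω; simp [Set.mem_iInter]
    rw [this]
    exact (MeasurableSet.iInter fun i => (hX _) (measurableSet_ZZ _)).inter
      (MeasurableSet.iInter fun i => (hX _) (measurableSet_ZZ _))
  rw [hev, measure_iUnion hdisj hmeas,
    tsum_congr fun p : ι => prob_pair_atom hX hind hlaw t m p.1.1 p.2.1,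
    ENNReal.tsum_prod', prob_cyl hX hind hlaw t Q1 hQ1, prob_cyl hX hind hlaw m Q2 hQ2,
    ← ENNReal.tsum_mul_right]
  refine tsum_congr fun d => ?_
  exact (show (∑' b : {e : Fin m → ℤ × ℤ // Q2 (ext m e)},
      (∏ i : Fin t, μ {d.1 i}) * ∏ i : Fin m, μ {b.1 i}) =
      (∏ i : Fin t, μ {d.1 i}) * ∑' b : {e : Fin m → ℤ × ℤ // Q2 (ext m e)},
        ∏ i : Fin m, μ {b.1 i} from ENNReal.tsum_mul_left)

end Prob

end CrossTermAux
namespace CrossTermAux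
set_option linter.unusedSectionVars false

open MeasureTheory ProbabilityTheory
open scoped ENNReal

theorem mu_neg {μ : Measure (ℤ × ℤ)}
    (hsym : Measure.map (fun z : ℤ × ℤ => -z) μ = μ) (z : ℤ × ℤ) : μ {-z} = μ {z} := by
  conv_rhs => rw [← hsym]
  rw [Measure.map_apply (fun _ _ => measurableSet_ZZ _) (measurableSet_ZZ _)]
  congr 1
  ext w
  simp [neg_eq_iff_eq_neg, eq_comm]

section Prob

variable {Ω : Type*} [MeasurableSpace Ω] {P : Measure Ω}
  {X : ℕ → Ω → ℤ × ℤ} {μ : Measure (ℤ × ℤ)}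

theorem prob_rev (hX : ∀ j, Measurable (X j))
    (hind : iIndepFun X P) (hlaw : ∀ j, Measure.map (X j) P = μ)
    (hsym : Measure.map (fun z : ℤ × ℤ => -z) μ = μ)
    (n : ℕ) (Q Q' : (ℕ → ℤ × ℤ) → Prop)
    (hQ : ∀ c c', (∀ i < n, c i = c' i) → Q c → Q c')
    (hQ' : ∀ c c', (∀ i < n, c i = c' i) → Q' c → Q' c')
    (h1 : ∀ c, Q c → Q' fun i => - c (n - 1 - i))
    (h2 : ∀ c, Q' c → Q fun i => - c (n - 1 - i)) :
    P {ω | Q fun i => X i ω} = P {ω | Q' fun i => X i ω} := by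
  rw [prob_cyl hX hind hlaw n Q hQ, prob_cyl hX hind hlaw n Q' hQ']
  have key : ∀ (R R' : (ℕ → ℤ × ℤ) → Prop),
      (∀ c c', (∀ i < n, c i = c' i) → R' c → R' c') →
      (∀ c, R c → R' fun i => - c (n - 1 - i)) →
      ∀ d : Fin n → ℤ × ℤ, R (ext n d) → R' (ext n fun i : Fin n => - d i.rev) := by
    intro R R' hR' h d hd
    refine hR' _ _ (fun i hi => ?_) (h _ hd)
    have hlt : n - 1 - i < n := by omega
    simp only [ext, dif_pos hi, dif_pos hlt]
    congr 2
    exact Fin.ext (by simp [Fin.val_rev]; omega)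
  set e : {d : Fin n → ℤ × ℤ // Q (ext n d)} ≃ {d : Fin n → ℤ × ℤ // Q' (ext n d)} :=
    { toFun := fun d => ⟨fun i => - d.1 i.rev, key Q Q' hQ' h1 d.1 d.2⟩
      invFun := fun d => ⟨fun i => - d.1 i.rev, key Q' Q hQ h2 d.1 d.2⟩
      left_inv := fun d => Subtype.ext (funext fun i => by simp)
      right_inv := fun d => Subtype.ext (funext fun i => by simp) } with he
  rw [← Equiv.tsum_eq e fun d => ∏ i : Fin n, μ {d.1 i}]
  refine tsum_congr fun d => ?_
  have : ∀ i : Fin n, μ {(e d).1 i} = μ {d.1 i.rev} := fun i => by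
    simp only [he, Equiv.coe_fn_mk]
    exact mu_neg hsym _
  rw [Finset.prod_congr rfl fun i _ => this i]
  exact (Equiv.prod_comp Fin.revPerm fun i => μ {d.1 i}).symm

end Prob

end CrossTermAux
namespace CrossTermAux
set_option linter.unusedSectionVars false

open MeasureTheory ProbabilityTheory
open scoped ENNReal

theorem W_rev {x y : ℤ × ℤ} {c : ℕ → ℤ × ℤ} {j : ℕ} (h : W x c j = y)
    {s : ℕ} (hs : s ≤ j) : W y (fun i => - c (j - 1 - i)) s = W x c (j - s) := by
  have hsplit : y = W x c (j - s) + ∑ i ∈ Finset.range s, c (j - s + i) := by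
    have h2 := W_shift x c (j - s) s
    rw [show j - s + s = j from by omega] at h2
    rw [← h, h2]; rfl
  have hre : ∑ i ∈ Finset.range s, c (j - 1 - i) = ∑ i ∈ Finset.range s, c (j - s + i) := by
    rw [← Finset.sum_range_reflect (fun i => c (j - s + i)) s]
    refine Finset.sum_congr rfl fun i hi => ?_
    have hi' : i < s := Finset.mem_range.mp hi
    congr 1
    omega
  unfold W
  rw [Finset.sum_neg_distrib, hre, hsplit]
  unfold W
  abel

section Prob

variable {Ω : Type*} [MeasurableSpace Ω] {P : Measure Ω}
  {X : ℕ → Ω → ℤ × ℤ} {μ : Measure (ℤ × ℤ)}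

theorem green_term_eq (X : ℕ → Ω → ℤ × ℤ) (E : Set (ℤ × ℤ)) (x y : ℤ × ℤ) (j : ℕ) :
    {ω | walk X x j ω = y ∧ (j : ℝ≥0∞) < hitTime (fun t => walk X x t ω) Eᶜ} =
      {ω | (fun c => W x c j = y ∧ ∀ s ≤ j, W x c s ∉ Eᶜ) fun i => X i ω} := by
  ext ω
  simp only [Set.mem_setOf_eq, walk_eq_W, lt_hitTime_iff]

theorem green_symm (hX : ∀ j, Measurable (X j))
    (hind : iIndepFun X P) (hlaw : ∀ j, Measure.map (X j) P = μ)
    (hsym : Measure.map (fun z : ℤ × ℤ => -z) μ = μ)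
    (E : Set (ℤ × ℤ)) (x y : ℤ × ℤ) :
    green P X E x y = green P X E y x := by
  unfold green
  refine tsum_congr fun j => ?_
  rw [green_term_eq X E x y j, green_term_eq X E y x j]
  have hdep : ∀ (u v : ℤ × ℤ) (c c' : ℕ → ℤ × ℤ), (∀ i < j, c i = c' i) →
      (W u c j = v ∧ ∀ s ≤ j, W u c s ∉ Eᶜ) → (W u c' j = v ∧ ∀ s ≤ j, W u c' s ∉ Eᶜ) := by
    rintro u v c c' hcc ⟨hW, hs⟩
    have hWeq : ∀ s ≤ j, W u c s = W u c' s := fun s hsj =>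
      W_congr fun i hi => hcc i (lt_of_lt_of_le hi hsj)
    exact ⟨(hWeq j le_rfl).symm.trans hW, fun s hsj => (hWeq s hsj) ▸ hs s hsj⟩
  have hfwd : ∀ (u v : ℤ × ℤ) (c : ℕ → ℤ × ℤ),
      (W u c j = v ∧ ∀ s ≤ j, W u c s ∉ Eᶜ) →
      (W v (fun i => - c (j - 1 - i)) j = u ∧
        ∀ s ≤ j, W v (fun i => - c (j - 1 - i)) s ∉ Eᶜ) := by
    rintro u v c ⟨hW, hs⟩
    constructor
    · rw [W_rev hW le_rfl, Nat.sub_self]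
      unfold W; simp
    · intro s hsj
      rw [W_rev hW hsj]
      exact hs (j - s) (by omega)
  exact prob_rev hX hind hlaw hsym j _ _ (hdep x y) (hdep y x) (hfwd x y) (hfwd y x)

end Prob

end CrossTermAux
namespace CrossTermAux
set_option linter.unusedSectionVars false

open MeasureTheory ProbabilityTheory
open scoped ENNReal

theorem W_zero (x : ℤ × ℤ) (c : ℕ → ℤ × ℤ) : W x c 0 = x := by simp [W]

/-- triangle reindexing equivs -/
def triEquiv1 : (Σ j : ℕ, Fin (j + 1)) ≃ ℕ × ℕ where
  toFun p := (p.2.1, p.1 - p.2.1)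
  invFun q := ⟨q.1 + q.2, ⟨q.1, by omega⟩⟩
  left_inv p := by
    obtain ⟨j, t⟩ := p
    have ht : t.1 ≤ j := by omega
    have h : t.1 + (j - t.1) = j := by omega
    exact Sigma.ext h ((Fin.heq_ext_iff (by simp only []; omega)).mpr rfl)
  right_inv q := by
    obtain ⟨u, n⟩ := q
    simp

def triEquiv2 : (Σ t : ℕ, Fin t) ≃ ℕ × ℕ where
  toFun p := (p.2.1, p.1 - p.2.1 - 1)
  invFun q := ⟨q.1 + q.2 + 1, ⟨q.1, by omega⟩⟩
  left_inv p := by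
    obtain ⟨t, t'⟩ := p
    have ht : t'.1 < t := t'.2
    have h : t'.1 + (t - t'.1 - 1) + 1 = t := by omega
    exact Sigma.ext h ((Fin.heq_ext_iff (by simp only []; omega)).mpr rfl)
  right_inv q := by
    obtain ⟨u, n⟩ := q
    have : u + n + 1 - u - 1 = n := by omega
    simp [this]

theorem tsum_tri1 (f : ℕ → ℕ → ℝ≥0∞) :
    ∑' (j : ℕ), ∑' (t : Fin (j + 1)), f t.1 (j - t.1) = ∑' (t : ℕ), ∑' (m : ℕ), f t m := by
  rw [← ENNReal.tsum_sigma' (fun p : Σ j : ℕ, Fin (j + 1) => f p.2.1 (p.1 - p.2.1))]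
  rw [← triEquiv1.symm.tsum_eq (fun p : Σ j : ℕ, Fin (j + 1) => f p.2.1 (p.1 - p.2.1))]
  rw [ENNReal.tsum_prod']
  refine tsum_congr fun t => tsum_congr fun m => ?_
  simp only [triEquiv1, Equiv.coe_fn_symm_mk]
  congr 1
  omega

theorem tsum_tri2 (f : ℕ → ℕ → ℝ≥0∞) :
    ∑' (t : ℕ), ∑' (t' : Fin t), f t'.1 (t - t'.1) = ∑' (u : ℕ), ∑' (n : ℕ), f u (n + 1) := by
  rw [← ENNReal.tsum_sigma' (fun p : Σ t : ℕ, Fin t => f p.2.1 (p.1 - p.2.1))]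
  rw [← triEquiv2.symm.tsum_eq (fun p : Σ t : ℕ, Fin t => f p.2.1 (p.1 - p.2.1))]
  rw [ENNReal.tsum_prod']
  refine tsum_congr fun u => tsum_congr fun n => ?_
  simp only [triEquiv2, Equiv.coe_fn_symm_mk]
  congr 1
  omega

end CrossTermAux
namespace CrossTermAux
set_option linter.unusedSectionVars false

open MeasureTheory ProbabilityTheory
open scoped ENNReal

/-- `FkP a b A k t c`: along the walk from `a` with steps `c`, time `t` is the
`k`-th "renewal" visit to `b` (first visit to `b`, then alternately first visit to `A`,
first visit back to `b`, etc.). -/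
def FkP (a b : ℤ × ℤ) (A : Set (ℤ × ℤ)) : ℕ → ℕ → (ℕ → ℤ × ℤ) → Prop
  | 0, t, c => W a c t = b ∧ ∀ s < t, W a c s ≠ b
  | k + 1, t, c => ∃ t' r, FkP a b A k t' c ∧ t' < r ∧ r < t ∧ W a c r ∈ A ∧
      (∀ s, t' < s → s < r → W a c s ∉ A) ∧ W a c t = b ∧ ∀ s, r < s → s < t → W a c s ≠ b

theorem FkP_b {a b : ℤ × ℤ} {A : Set (ℤ × ℤ)} {k t : ℕ} {c : ℕ → ℤ × ℤ}
    (h : FkP a b A k t c) : W a c t = b := by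
  cases k with
  | zero => exact h.1
  | succ k => obtain ⟨t', r, _, _, _, _, _, hb, _⟩ := h; exact hb

theorem FkP_congr {a b : ℤ × ℤ} {A : Set (ℤ × ℤ)} {k t : ℕ} {c c' : ℕ → ℤ × ℤ}
    (hcc : ∀ i < t, c i = c' i) (h : FkP a b A k t c) : FkP a b A k t c' := by
  induction k generalizing t with
  | zero =>
    refine ⟨?_, fun s hs => ?_⟩
    · rw [← W_congr fun i hi => hcc i hi]; exact h.1
    · rw [← W_congr fun i hi => hcc i (by omega)]; exact h.2 s hs
  | succ k ih =>
    obtain ⟨t', r, hF, h1, h2, h3, h4, h5, h6⟩ := h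
    refine ⟨t', r, ih (fun i hi => hcc i (by omega)) hF, h1, h2, ?_, ?_, ?_, ?_⟩
    · rw [← W_congr fun i hi => hcc i (by omega)]; exact h3
    · intro s hs1 hs2
      rw [← W_congr fun i hi => hcc i (by omega)]; exact h4 s hs1 hs2
    · rw [← W_congr fun i hi => hcc i (by omega)]; exact h5
    · intro s hs1 hs2
      rw [← W_congr fun i hi => hcc i (by omega)]; exact h6 s hs1 hs2

theorem FkP_zero_unique {a b : ℤ × ℤ} {A : Set (ℤ × ℤ)} {t t' : ℕ} {c : ℕ → ℤ × ℤ}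
    (h : FkP a b A 0 t c) (h' : FkP a b A 0 t' c) : t = t' := by
  by_contra hne
  rcases Nat.lt_or_ge t t' with hlt | hge
  · exact h'.2 t hlt h.1
  · exact h.2 t' (by omega) h'.1

/-- the covering lemma: any visit to `b` happens during some renewal block. -/
theorem FkP_cover {a b : ℤ × ℤ} {A : Set (ℤ × ℤ)} (hbA : b ∉ A) {c : ℕ → ℤ × ℤ} {j : ℕ}
    (hj : W a c j = b) :
    ∃ k t, t ≤ j ∧ FkP a b A k t c ∧ ∀ s, t < s → s ≤ j → W a c s ∉ A := by
  classical
  -- first visit to b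
  have hex : ∃ s, W a c s = b := ⟨j, hj⟩
  have h0 : FkP a b A 0 (Nat.find hex) c := ⟨Nat.find_spec hex, fun s hs => Nat.find_min hex hs⟩
  have h0j : Nat.find hex ≤ j := Nat.find_min' hex hj
  -- iterate
  suffices H : ∀ N k t, j - t ≤ N → t ≤ j → FkP a b A k t c →
      ∃ k' t', t' ≤ j ∧ FkP a b A k' t' c ∧ ∀ s, t' < s → s ≤ j → W a c s ∉ A by
    exact H j 0 (Nat.find hex) (by omega) h0j h0
  intro N
  induction N with
  | zero =>
    intro k t hN htj hF
    exact ⟨k, t, htj, hF, fun s hs1 hs2 => by omega⟩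
  | succ N ih =>
    intro k t hN htj hF
    by_cases hA : ∃ s, t < s ∧ s ≤ j ∧ W a c s ∈ A
    · -- first A-visit after t
      set r := Nat.find hA with hrdef
      obtain ⟨hr1, hr2, hr3⟩ := Nat.find_spec hA
      rw [← hrdef] at hr1 hr2 hr3
      have hrmin : ∀ s, t < s → s < r → W a c s ∉ A := by
        intro s hs1 hs2 hmem
        exact Nat.find_min hA hs2 ⟨hs1, by omega, hmem⟩
      have hrj : r < j := by
        by_contra hcon
        have hrj' : r = j := by omega
        rw [hrj'] at hr3
        exact hbA (hj ▸ hr3)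
      -- first b-visit after r
      have hexb : ∃ s, r < s ∧ W a c s = b := ⟨j, hrj, hj⟩
      set t1 := Nat.find hexb with ht1def
      obtain ⟨ht1r, ht1b⟩ := Nat.find_spec hexb
      have ht1j : t1 ≤ j := Nat.find_min' hexb ⟨hrj, hj⟩
      have ht1min : ∀ s, r < s → s < t1 → W a c s ≠ b := by
        intro s hs1 hs2 hmem
        exact Nat.find_min hexb hs2 ⟨hs1, hmem⟩
      have hF1 : FkP a b A (k + 1) t1 c :=
        ⟨t, r, hF, hr1, ht1r, hr3, hrmin, ht1b, ht1min⟩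
      exact ih (k + 1) t1 (by omega) ht1j hF1
    · push_neg at hA
      exact ⟨k, t, htj, hF, fun s hs1 hs2 => hA s hs1 hs2⟩

/-- one-cycle predicate from `b`: first visit to `A` at some `ρ`, then first return to `b`
at `m`, avoiding `C` throughout. -/
def Dp (b : ℤ × ℤ) (A C : Set (ℤ × ℤ)) (m : ℕ) (d : ℕ → ℤ × ℤ) : Prop :=
  ∃ ρ, 0 < ρ ∧ ρ < m ∧ W b d ρ ∈ A ∧ (∀ s, 0 < s → s < ρ → W b d s ∉ A) ∧
    W b d m = b ∧ (∀ s, ρ < s → s < m → W b d s ≠ b) ∧ ∀ s, 0 < s → s ≤ m → W b d s ∉ C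

theorem Dp_congr {b : ℤ × ℤ} {A C : Set (ℤ × ℤ)} {m : ℕ} {d d' : ℕ → ℤ × ℤ}
    (hdd : ∀ i < m, d i = d' i) (h : Dp b A C m d) : Dp b A C m d' := by
  obtain ⟨ρ, h1, h2, h3, h4, h5, h6, h7⟩ := h
  have hW : ∀ s ≤ m, W b d s = W b d' s := fun s hs =>
    W_congr fun i hi => hdd i (by omega)
  exact ⟨ρ, h1, h2, hW ρ (by omega) ▸ h3,
    fun s hs1 hs2 => hW s (by omega) ▸ h4 s hs1 hs2, hW m le_rfl ▸ h5,
    fun s hs1 hs2 => hW s (by omega) ▸ h6 s hs1 hs2,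
    fun s hs1 hs2 => hW s hs2 ▸ h7 s hs1 hs2⟩

theorem Dp_unique {b : ℤ × ℤ} {A C : Set (ℤ × ℤ)} (hbA : b ∉ A) {m m' : ℕ} {d : ℕ → ℤ × ℤ}
    (h : Dp b A C m d) (h' : Dp b A C m' d) : m = m' := by
  obtain ⟨ρ, h1, h2, h3, h4, h5, h6, h7⟩ := h
  obtain ⟨ρ', h1', h2', h3', h4', h5', h6', h7'⟩ := h'
  have hρ : ρ = ρ' := by
    by_contra hne
    rcases Nat.lt_or_ge ρ ρ' with hlt | hge
    · exact h4' ρ h1 hlt h3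
    · exact h4 ρ' h1' (by omega) h3'
  by_contra hne
  rcases Nat.lt_or_ge m m' with hlt | hge
  · refine h6' m ?_ hlt h5
    omega
  · refine h6 m' ?_ (by omega) h5'
    omega

/-- splitting a `(k+1)`-renewal at the `k`-th renewal -/
theorem FkP_split {a b : ℤ × ℤ} {A C : Set (ℤ × ℤ)} {k t : ℕ} {c : ℕ → ℤ × ℤ}
    (hF : FkP a b A (k + 1) t c) (hNC : ∀ s ≤ t, W a c s ∉ C) :
    ∃ t' : ℕ, t' < t ∧ (FkP a b A k t' c ∧ ∀ s ≤ t', W a c s ∉ C) ∧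
      Dp b A C (t - t') (fun i => c (t' + i)) := by
  obtain ⟨t', r, hFk, h1, h2, h3, h4, h5, h6⟩ := hF
  have hbt' : W a c t' = b := FkP_b hFk
  have hshift : ∀ s, W b (fun i => c (t' + i)) s = W a c (t' + s) := by
    intro s
    rw [W_shift a c t' s, hbt']
  refine ⟨t', by omega, ⟨hFk, fun s hs => hNC s (by omega)⟩, r - t', by omega, by omega,
    ?_, ?_, ?_, ?_, ?_⟩
  · rw [hshift, show t' + (r - t') = r from by omega]; exact h3
  · intro s hs1 hs2
    rw [hshift]
    exact h4 (t' + s) (by omega) (by omega)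
  · rw [hshift, show t' + (t - t') = t from by omega]; exact h5
  · intro s hs1 hs2
    rw [hshift]
    exact h6 (t' + s) (by omega) (by omega)
  · intro s hs1 hs2
    rw [hshift]
    exact hNC (t' + s) (by omega)

end CrossTermAux
namespace CrossTermAux
set_option linter.unusedSectionVars false
set_option maxHeartbeats 1000000

open MeasureTheory ProbabilityTheory
open scoped ENNReal

theorem main_bound {Ω : Type*} [MeasurableSpace Ω] {P : Measure Ω}
    {X : ℕ → Ω → ℤ × ℤ} (hX : ∀ j, Measurable (X j)) {μ : Measure (ℤ × ℤ)}
    (hind : iIndepFun X P)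
    (hlaw : ∀ j, Measure.map (X j) P = μ)
    (A B C : Set (ℤ × ℤ)) (hcover : A ∪ B ∪ C = Set.univ)
    (hAB : Disjoint A B) (hAC : Disjoint A C) (hBC : Disjoint B C)
    (a b : ℤ × ℤ) (ha : a ∈ A) (hb : b ∈ B) :
    green P X (A ∪ B) a b ≤
      (excPsi P X B C a / (1 - excRho P X A B C b)) * green P X B b b := by
  classical
  have hbA : b ∉ A := Set.disjoint_right.mp hAB hb
  have hbC : b ∉ C := Set.disjoint_left.mp hBC hb
  have hmemB : ∀ z : ℤ × ℤ, z ∉ A → z ∉ C → z ∈ B := by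
    intro z h1 h2
    have hz : z ∈ A ∪ B ∪ C := hcover ▸ Set.mem_univ z
    rcases hz with (h | h) | h
    · exact absurd h h1
    · exact h
    · exact absurd h h2
  have hcompl : (A ∪ B)ᶜ = C := by
    ext z
    simp only [Set.mem_compl_iff, Set.mem_union]
    constructor
    · intro h
      push_neg at h
      have hz : z ∈ A ∪ B ∪ C := hcover ▸ Set.mem_univ z
      rcases hz with (hh | hh) | hh
      · exact absurd hh h.1
      · exact absurd hh h.2
      · exact hh
    · intro hzC
      push_neg
      exact ⟨fun hzA => Set.disjoint_left.mp hAC hzA hzC,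
        fun hzB => Set.disjoint_left.mp hBC hzB hzC⟩
  set Q1 : ℕ → ℕ → (ℕ → ℤ × ℤ) → Prop :=
    fun k t c => FkP a b A k t c ∧ ∀ s ≤ t, W a c s ∉ C with hQ1def
  set BS : ℕ → (ℕ → ℤ × ℤ) → Prop :=
    fun m d => W b d m = b ∧ ∀ s ≤ m, W b d s ∈ B with hBSdef
  have hQ1dep : ∀ k t (c c' : ℕ → ℤ × ℤ), (∀ i < t, c i = c' i) → Q1 k t c → Q1 k t c' := by
    rintro k t c c' hcc ⟨h1, h2⟩
    refine ⟨FkP_congr hcc h1, fun s hs => ?_⟩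
    rw [← W_congr fun i hi => hcc i (by omega)]
    exact h2 s hs
  have hBSdep : ∀ m (c c' : ℕ → ℤ × ℤ), (∀ i < m, c i = c' i) → BS m c → BS m c' := by
    rintro m c c' hcc ⟨h1, h2⟩
    constructor
    · rw [← W_congr fun i hi => hcc i hi]; exact h1
    · intro s hs
      rw [← W_congr fun i hi => hcc i (by omega)]
      exact h2 s hs
  have hDpdep : ∀ m (c c' : ℕ → ℤ × ℤ), (∀ i < m, c i = c' i) → Dp b A C m c → Dp b A C m c' :=
    fun m c c' h => Dp_congr h
  set pk : ℕ → ℕ → ℝ≥0∞ := fun k t => P {ω | Q1 k t fun i => X i ω} with hpkdef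
  set q : ℕ → ℝ≥0∞ := fun m => P {ω | BS m fun i => X i ω} with hqdef
  set PD : ℕ → ℝ≥0∞ := fun m => P {ω | Dp b A C m fun i => X i ω} with hPDdef
  set ψ := excPsi P X B C a with hψdef
  set φ := excRho P X A B C b with hφdef
  have hgreen : green P X (A ∪ B) a b =
      ∑' j : ℕ, P {ω | (fun c => W a c j = b ∧ ∀ s ≤ j, W a c s ∉ C) fun i => X i ω} := by
    unfold green
    refine tsum_congr fun j => congrArg P ?_
    rw [green_term_eq X (A ∪ B) a b j, hcompl]
  have hgreenB : green P X B b b = ∑' m, q m := by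
    unfold green
    refine tsum_congr fun m => congrArg P ?_
    rw [green_term_eq X B b b m]
    ext ω
    simp only [Set.mem_setOf_eq, Set.mem_compl_iff, not_not, hBSdef]
  -- Step A : per-time decomposition
  have hstepA : ∀ j : ℕ, P {ω | (fun c => W a c j = b ∧ ∀ s ≤ j, W a c s ∉ C) fun i => X i ω}
      ≤ ∑' (k : ℕ), ∑' (t : Fin (j + 1)), pk k t.1 * q (j - t.1) := by
    intro j
    have hsub : {ω | (fun c => W a c j = b ∧ ∀ s ≤ j, W a c s ∉ C) fun i => X i ω} ⊆
        ⋃ (k : ℕ), ⋃ (t : Fin (j + 1)),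
          {ω | Q1 k t.1 (fun i => X i ω) ∧ BS (j - t.1) fun i => X (t.1 + i) ω} := by
      rintro ω ⟨hWj, hNC⟩
      obtain ⟨k, t, htj, hF, hnoA⟩ := FkP_cover hbA hWj
      have hbt : W a (fun i => X i ω) t = b := FkP_b hF
      have hshift : ∀ s, W b (fun i => X (t + i) ω) s = W a (fun i => X i ω) (t + s) := by
        intro s
        rw [W_shift a _ t s, hbt]
      refine Set.mem_iUnion.mpr ⟨k, Set.mem_iUnion.mpr ⟨⟨t, by omega⟩, ?_⟩⟩
      show Q1 k t (fun i => X i ω) ∧ BS (j - t) fun i => X (t + i) ω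
      refine ⟨⟨hF, fun s hs => hNC s (by omega)⟩, ?_, ?_⟩
      · rw [hshift, show t + (j - t) = j from by omega]; exact hWj
      · intro s hs
        rw [hshift]
        rcases Nat.eq_zero_or_pos s with h0 | h0
        · subst h0
          rw [show t + 0 = t from rfl, hbt]
          exact hb
        · exact hmemB _ (hnoA (t + s) (by omega) (by omega)) (hNC (t + s) (by omega))
    refine le_trans (measure_mono hsub) (le_trans (measure_iUnion_le _) ?_)
    refine ENNReal.tsum_le_tsum fun k => le_trans (measure_iUnion_le _) ?_
    refine le_of_eq (tsum_congr fun t => ?_)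
    exact prob_split hX hind hlaw t.1 (j - t.1) (Q1 k t.1) (BS (j - t.1))
      (hQ1dep k t.1) (hBSdep (j - t.1))
  have hmain1 : green P X (A ∪ B) a b ≤ ∑' k : ℕ, (∑' t : ℕ, pk k t) * ∑' m : ℕ, q m := by
    rw [hgreen]
    refine le_trans (ENNReal.tsum_le_tsum hstepA) ?_
    rw [ENNReal.tsum_comm]
    refine le_of_eq (tsum_congr fun k => ?_)
    rw [tsum_tri1 fun t m => pk k t * q m]
    rw [tsum_congr fun t => (ENNReal.tsum_mul_left :
      ∑' m, pk k t * q m = pk k t * ∑' m, q m)]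
    exact ENNReal.tsum_mul_right
  -- base case bound
  have hP0 : ∑' t : ℕ, pk 0 t ≤ ψ := by
    have hdisj : Pairwise (Function.onFun Disjoint
        fun t : ℕ => {ω | Q1 0 t fun i => X i ω}) := by
      intro t t' htt'
      refine Set.disjoint_left.mpr fun ω h1 h2 => htt' ?_
      exact FkP_zero_unique h1.1 h2.1
    have hmeas : ∀ t : ℕ, MeasurableSet {ω | Q1 0 t fun i => X i ω} := fun t =>
      measurable_cyl hX t (Q1 0 t) (hQ1dep 0 t)
    rw [show (∑' t : ℕ, pk 0 t) = P (⋃ t : ℕ, {ω | Q1 0 t fun i => X i ω}) from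
      (measure_iUnion hdisj hmeas).symm]
    refine measure_mono fun ω hω => ?_
    obtain ⟨t, hF, hNC⟩ := Set.mem_iUnion.mp hω
    have h1 : hitTime (fun s => walk X a s ω) B ≤ t := by
      refine hitTime_le _ B ?_
      rw [walk_eq_W, hF.1]
      exact hb
    have h2 : (t : ℝ≥0∞) < hitTime (fun s => walk X a s ω) C := by
      refine lt_hitTime_iff.mpr fun s hs => ?_
      rw [walk_eq_W]
      exact hNC s hs
    exact lt_of_le_of_lt h1 h2
  -- cycle bound
  have hPDsum : ∑' n : ℕ, PD (n + 1) ≤ φ := by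
    have hdisj : Pairwise (Function.onFun Disjoint
        fun n : ℕ => {ω | Dp b A C (n + 1) fun i => X i ω}) := by
      intro n n' hnn'
      refine Set.disjoint_left.mpr fun ω h1 h2 => hnn' ?_
      have := Dp_unique hbA h1 h2
      omega
    have hmeas : ∀ n : ℕ, MeasurableSet {ω | Dp b A C (n + 1) fun i => X i ω} := fun n =>
      measurable_cyl hX (n + 1) _ (hDpdep (n + 1))
    rw [show (∑' n : ℕ, PD (n + 1)) = P (⋃ n : ℕ, {ω | Dp b A C (n + 1) fun i => X i ω}) from
      (measure_iUnion hdisj hmeas).symm]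
    refine measure_mono fun ω hω => ?_
    obtain ⟨n, hD⟩ := Set.mem_iUnion.mp hω
    obtain ⟨ρ, h1, h2, h3, h4, h5, h6, h7⟩ := hD
    have hwalk : ∀ s, walk X b s ω = W b (fun i => X i ω) s := fun s => walk_eq_W X b s ω
    have hTA : hitTime (fun s => walk X b s ω) A = ρ := by
      refine hitTime_eq ?_ fun s hs => ?_
      · rw [hwalk]; exact h3
      · rw [hwalk]
        rcases Nat.eq_zero_or_pos s with h0 | h0
        · subst h0; rw [W_zero]; exact hbA
        · exact h4 s h0 hs
    have hTC : ((n + 1 : ℕ) : ℝ≥0∞) < hitTime (fun s => walk X b s ω) C := by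
      refine lt_hitTime_iff.mpr fun s hs => ?_
      rw [hwalk]
      rcases Nat.eq_zero_or_pos s with h0 | h0
      · subst h0; rw [W_zero]; exact hbC
      · exact h7 s h0 hs
    have hρm : ((ρ : ℕ) : ℝ≥0∞) < ((n + 1 : ℕ) : ℝ≥0∞) := by exact_mod_cast h2
    constructor
    · rw [hTA]
      exact lt_trans hρm hTC
    · rw [hTA]
      refine lt_of_le_of_lt (hitAfter_le _ B hρm ?_) hTC
      rw [hwalk, h5]
      exact hb
  -- inductive step
  have hstep6 : ∀ k : ℕ, ∑' t : ℕ, pk (k + 1) t ≤ (∑' t : ℕ, pk k t) * φ := by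
    intro k
    have hterm : ∀ t : ℕ, pk (k + 1) t ≤ ∑' t' : Fin t, pk k t'.1 * PD (t - t'.1) := by
      intro t
      have hsub : {ω | Q1 (k + 1) t fun i => X i ω} ⊆ ⋃ t' : Fin t,
          {ω | Q1 k t'.1 (fun i => X i ω) ∧ Dp b A C (t - t'.1) fun i => X (t'.1 + i) ω} := by
        rintro ω ⟨hF, hNC⟩
        obtain ⟨t', ht't, hQ, hD⟩ := FkP_split hF hNC
        exact Set.mem_iUnion.mpr ⟨⟨t', ht't⟩, hQ, hD⟩
      refine le_trans (measure_mono hsub) (le_trans (measure_iUnion_le _) ?_)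
      refine le_of_eq (tsum_congr fun t' => ?_)
      exact prob_split hX hind hlaw t'.1 (t - t'.1) (Q1 k t'.1) (Dp b A C (t - t'.1))
        (hQ1dep k t'.1) (hDpdep (t - t'.1))
    calc ∑' t : ℕ, pk (k + 1) t
        ≤ ∑' t : ℕ, ∑' t' : Fin t, pk k t'.1 * PD (t - t'.1) := ENNReal.tsum_le_tsum hterm
      _ = ∑' u : ℕ, ∑' n : ℕ, pk k u * PD (n + 1) := tsum_tri2 fun u m => pk k u * PD m
      _ = ∑' u : ℕ, pk k u * ∑' n : ℕ, PD (n + 1) :=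
          tsum_congr fun u => ENNReal.tsum_mul_left
      _ ≤ ∑' u : ℕ, pk k u * φ := ENNReal.tsum_le_tsum fun u => mul_le_mul_right hPDsum _
      _ = (∑' u : ℕ, pk k u) * φ := ENNReal.tsum_mul_right
  have hPk : ∀ k : ℕ, ∑' t : ℕ, pk k t ≤ ψ * φ ^ k := by
    intro k
    induction k with
    | zero => simpa using hP0
    | succ k ih =>
      refine le_trans (hstep6 k) ?_
      rw [pow_succ, ← mul_assoc]
      exact mul_le_mul_left ih φ
  refine le_trans hmain1 ?_
  calc ∑' k : ℕ, (∑' t : ℕ, pk k t) * ∑' m : ℕ, q m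
      ≤ ∑' k : ℕ, (ψ * φ ^ k) * ∑' m : ℕ, q m :=
        ENNReal.tsum_le_tsum fun k => mul_le_mul_left (hPk k) _
    _ = ∑' k : ℕ, φ ^ k * (ψ * ∑' m : ℕ, q m) := tsum_congr fun k => by ring
    _ = (∑' k : ℕ, φ ^ k) * (ψ * ∑' m : ℕ, q m) := ENNReal.tsum_mul_right
    _ = (1 - φ)⁻¹ * (ψ * ∑' m : ℕ, q m) := by rw [ENNReal.tsum_geometric]
    _ = (ψ / (1 - φ)) * green P X B b b := by
        rw [hgreenB, div_eq_mul_inv]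
        ring

end CrossTermAux

/-- Cross-term Green's function bound: for a symmetric recurrent walk and a partition
`A ⊔ B ⊔ C` of `ℤ²`, for `a ∈ A`, `b ∈ B` with `ρ_a < 1`, `φ_b < 1`:
`0 ≤ G_{A∪B}(a,b) ≤ min{ (σ_b/(1−ρ_a))·G_A(a,a), (ψ_a/(1−φ_b))·G_B(b,b) }`. -/
theorem green_cross_term_bound {Ω : Type*} [MeasurableSpace Ω] (P : Measure Ω)
    [IsProbabilityMeasure P] (X : ℕ → Ω → ℤ × ℤ) (hX : ∀ j, Measurable (X j))
    (μ : Measure (ℤ × ℤ)) [IsProbabilityMeasure μ]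
    (hind : iIndepFun X P)
    (hlaw : ∀ j, Measure.map (X j) P = μ)
    (hsym : Measure.map (fun z : ℤ × ℤ => -z) μ = μ)
    (hrec : ∀ x y : ℤ × ℤ, ∀ᵐ ω ∂P, ∃ t : ℕ, walk X x t ω = y)
    (A B C : Set (ℤ × ℤ)) (hcover : A ∪ B ∪ C = Set.univ)
    (hAB : Disjoint A B) (hAC : Disjoint A C) (hBC : Disjoint B C)
    (a b : ℤ × ℤ) (ha : a ∈ A) (hb : b ∈ B)
    (hρ : excRho P X B A C a < 1) (hφ : excRho P X A B C b < 1) :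
    0 ≤ green P X (A ∪ B) a b ∧
    green P X (A ∪ B) a b ≤
      min ((excPsi P X A C b / (1 - excRho P X B A C a)) * green P X A a a)
        ((excPsi P X B C a / (1 - excRho P X A B C b)) * green P X B b b) := by
  refine ⟨zero_le, le_min ?_ ?_⟩
  · have hcover' : B ∪ A ∪ C = Set.univ := by
      rw [Set.union_comm B A]; exact hcover
    have h := CrossTermAux.main_bound hX hind hlaw B A C hcover' hAB.symm hBC hAC b a hb ha
    rw [Set.union_comm B A] at h
    rwa [CrossTermAux.green_symm hX hind hlaw hsym (A ∪ B) a b]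
  · exact CrossTermAux.main_bound hX hind hlaw A B C hcover hAB hAC hBC a b ha hb

end
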